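/- arXiv:1810.05127 — 2 statements merged into one kernel-verified Lean document; each statement's English description precedes it below -/
import Mathlib

section
/- Let 𝒲 be the set of 2×2 real matrices A such that (a) A + iI is invertible, (b) i is not an eigenvalue of A, and (c) A has no purely imaginary (complex) eigenvalue of modulus ≥ 1. For A ∈ 𝒲 and a fixed r > 0, let M(A) := {(A+iI)u : u ∈ ℝ²} ⊂ ℂ² and S(A) := (ℝ² ∪ M(A)) ∩ closure(B(0,r)). Then the set of matrices A ∈ 𝒲 such that S(A) is not Lagrangian with respect to any Kähler form on ℂ² contains a nonempty subset which is open in the space of 2×2 real matrices; in fact, the set {A = [[x,y],[z,w]] ∈ 𝒲 : x ≠ w and x² + w² − 2xw + 2yz < 0} is such a nonempty open subset. -/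
set_option linter.unusedVariables false


open Complex Metric Set MvPolynomial
open scoped Manifold

noncomputable section

/-- The standard real plane `ℝ² ⊆ ℂ²`. -/
def realPlane : Set (EuclideanSpace ℂ (Fin 2)) := {z | ∀ j, (z j).im = 0}

/-- `M(A) = (A + iI)ℝ² ⊆ ℂ²`. -/
def MA (A : Matrix (Fin 2) (Fin 2) ℝ) : Set (EuclideanSpace ℂ (Fin 2)) :=
  {z | ∃ u : Fin 2 → ℝ, ∀ j, z j = ((∑ k, A j k * u k : ℝ) : ℂ) + (u j : ℂ) * Complex.I}

/-- A Kähler form on `ℂ²`: a smooth family of alternating real-bilinear forms which is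
closed, of bidegree `(1,1)`, and positive definite. -/
def IsKahler (ω : EuclideanSpace ℂ (Fin 2) → (EuclideanSpace ℂ (Fin 2) →L[ℝ] EuclideanSpace ℂ (Fin 2) →L[ℝ] ℝ)) : Prop :=
  ContDiff ℝ (⊤ : ℕ∞) ω ∧
  (∀ p u v, ω p u v = - ω p v u) ∧
  (∀ p u v w, fderiv ℝ ω p u v w - fderiv ℝ ω p v u w + fderiv ℝ ω p w u v = 0) ∧
  (∀ p u v, ω p (Complex.I • u) (Complex.I • v) = ω p u v) ∧
  (∀ p w, w ≠ 0 → 0 < ω p w (Complex.I • w))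

/-- `S(A) = (ℝ² ∪ M(A)) ∩ closedBall 0 r` is Lagrangian with respect to `ω`:
`ω` vanishes on the tangent spaces of both branches. -/
def IsLagrangianSA (r : ℝ) (A : Matrix (Fin 2) (Fin 2) ℝ)
    (ω : EuclideanSpace ℂ (Fin 2) → (EuclideanSpace ℂ (Fin 2) →L[ℝ] EuclideanSpace ℂ (Fin 2) →L[ℝ] ℝ)) : Prop :=
  (∀ p ∈ realPlane ∩ Metric.closedBall 0 r, ∀ u ∈ realPlane, ∀ v ∈ realPlane, ω p u v = 0) ∧
  (∀ p ∈ MA A ∩ Metric.closedBall 0 r, ∀ u ∈ MA A, ∀ v ∈ MA A, ω p u v = 0)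

/-- The set `𝒲` of 2×2 real matrices: `A + iI` invertible, `i` not an eigenvalue, and no
purely imaginary eigenvalue of modulus `≥ 1`. -/
def Wset : Set (Matrix (Fin 2) (Fin 2) ℝ) :=
  {A | (A.map (fun x : ℝ => (x : ℂ)) + Complex.I • 1).det ≠ 0 ∧
       (A.map (fun x : ℝ => (x : ℂ)) - Complex.I • 1).det ≠ 0 ∧
       ∀ μ : ℂ, μ.re = 0 → 1 ≤ ‖μ‖ →
         (A.map (fun x : ℝ => (x : ℂ)) - μ • 1).det ≠ 0}

lemma alg_contra' {x y z w h00 h01 h11 : ℝ} (hp0 : 0 < h00) (hp1 : 0 < h11)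
    (hd : h01^2 < h00*h11) (heq : (x - w)*h01 + z*h11 - y*h00 = 0)
    (hneg : x^2 + w^2 - 2*x*w + 2*y*z < 0) : False := by
  have h3 : (x-w)^2 < -2*(y*z) := by nlinarith [hneg]
  have h1 : (y*h00 - z*h11)^2 = (x-w)^2 * h01^2 := by
    linear_combination (-(y*h00 - z*h11 + (x-w)*h01)) * heq
  have h2 : (x-w)^2 * h01^2 ≤ (x-w)^2 * (h00*h11) :=
    mul_le_mul_of_nonneg_left hd.le (sq_nonneg (x-w))
  have h4 : (x-w)^2 * (h00*h11) < (-2*(y*z)) * (h00*h11) :=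
    mul_lt_mul_of_pos_right h3 (mul_pos hp0 hp1)
  nlinarith [sq_nonneg (y*h00), sq_nonneg (z*h11)]

lemma Bexp' (B : EuclideanSpace ℂ (Fin 2) →L[ℝ] EuclideanSpace ℂ (Fin 2) →L[ℝ] ℝ)
    (u1 u2 u3 v1 v2 v3 : EuclideanSpace ℂ (Fin 2)) (a b c d : ℝ) :
    B (a • u1 + b • u2 + u3) (c • v1 + d • v2 + v3)
      = a*(c*(B u1 v1)) + a*(d*(B u1 v2)) + a*(B u1 v3)
      + b*(c*(B u2 v1)) + b*(d*(B u2 v2)) + b*(B u2 v3)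
      + c*(B u3 v1) + d*(B u3 v2) + B u3 v3 := by
  simp only [map_add, map_smul, ContinuousLinearMap.add_apply, ContinuousLinearMap.smul_apply,
    smul_eq_mul, ContinuousLinearMap.coe_smul', Pi.smul_apply]
  ring

lemma kahler_core (B : EuclideanSpace ℂ (Fin 2) →L[ℝ] EuclideanSpace ℂ (Fin 2) →L[ℝ] ℝ)
    (e0 e1 : EuclideanSpace ℂ (Fin 2)) (x y z w : ℝ)
    (hanti : ∀ u v, B u v = - B v u)
    (key11 : ∀ u v, B (Complex.I • u) v = - B u (Complex.I • v))
    (hpos : ∀ v, v ≠ 0 → 0 < B v (Complex.I • v))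
    (z00 : B e0 e0 = 0) (z01 : B e0 e1 = 0) (z10 : B e1 e0 = 0) (z11 : B e1 e1 = 0)
    (zI01 : B (Complex.I • e0) (Complex.I • e1) = 0)
    (hne : ∀ a b : ℝ, a ≠ 0 → a • e0 + b • e1 ≠ 0)
    (he0 : e0 ≠ 0) (he1 : e1 ≠ 0)
    (hM : B (x • e0 + z • e1 + Complex.I • e0) (y • e0 + w • e1 + Complex.I • e1) = 0)
    (hq : x^2 + w^2 - 2*x*w + 2*y*z < 0) : False := by
  set h00 := B e0 (Complex.I • e0) with h00d
  set h01 := B e0 (Complex.I • e1) with h01d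
  set h10 := B e1 (Complex.I • e0) with h10d
  set h11 := B e1 (Complex.I • e1) with h11d
  have hI0e0 : B (Complex.I • e0) e0 = - h00 := key11 e0 e0
  have hI0e1 : B (Complex.I • e0) e1 = - h01 := key11 e0 e1
  have hsym : h10 = h01 := by
    have h1 : B (Complex.I • e1) e0 = - h10 := key11 e1 e0
    have h2 : B e0 (Complex.I • e1) = - B (Complex.I • e1) e0 := hanti _ _
    rw [h1] at h2
    rw [h01d, h10d, h2]; ring
  have hp00 : 0 < h00 := hpos e0 he0
  have hp11 : 0 < h11 := hpos e1 he1
  have hdet : h01^2 < h00 * h11 := by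
    have hwne : h11 • e0 + (-h01) • e1 ≠ 0 := hne _ _ (ne_of_gt hp11)
    have hp := hpos _ hwne
    have hIw : Complex.I • (h11 • e0 + (-h01) • e1)
        = h11 • (Complex.I • e0) + (-h01) • (Complex.I • e1) + 0 := by
      rw [smul_add, smul_comm Complex.I h11, smul_comm Complex.I (-h01), add_zero]
    rw [hIw, show h11 • e0 + (-h01) • e1 = h11 • e0 + (-h01) • e1 + 0 from (add_zero _).symm,
      Bexp'] at hp
    simp only [map_zero, ContinuousLinearMap.zero_apply, mul_zero, add_zero, zero_mul,
      zero_add] at hp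
    rw [← h00d, ← h01d, ← h10d, ← h11d, hsym] at hp
    nlinarith [hp, hp11]
  rw [Bexp'] at hM
  rw [zI01, hI0e0, hI0e1, z00, z01, z10, z11, ← h01d, ← h11d] at hM
  have heq : (x - w) * h01 + z * h11 - y * h00 = 0 := by linarith [hM]
  exact alg_contra' hp00 hp11 hdet heq hq

lemma detAsub (A : Matrix (Fin 2) (Fin 2) ℝ) (μ : ℂ) :
    (A.map (fun x : ℝ => (x:ℂ)) - μ • 1).det
      = ((A 0 0 : ℂ) - μ) * ((A 1 1:ℂ) - μ) - (A 0 1) * (A 1 0) := by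
  simp [Matrix.det_fin_two, Matrix.map_apply, Matrix.one_apply]

lemma wset_char (A : Matrix (Fin 2) (Fin 2) ℝ) :
    A ∈ Wset ↔ (A 0 0 + A 1 1 ≠ 0 ∨ A 0 0 * A 1 1 - A 0 1 * A 1 0 < 1) := by
  constructor
  · intro hW
    by_contra hcon
    push_neg at hcon
    obtain ⟨htr, hdet⟩ := hcon
    have hd0 : (0:ℝ) ≤ A 0 0 * A 1 1 - A 0 1 * A 1 0 := le_trans one_pos.le hdet
    set t := Real.sqrt (A 0 0 * A 1 1 - A 0 1 * A 1 0) with ht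
    have ht2 : t^2 = A 0 0 * A 1 1 - A 0 1 * A 1 0 := Real.sq_sqrt hd0
    have ht1 : 1 ≤ t := by nlinarith [Real.sqrt_nonneg (A 0 0 * A 1 1 - A 0 1 * A 1 0)]
    refine hW.2.2 ((t:ℂ) * Complex.I) (by simp) ?_ ?_
    · rw [norm_mul]
      simp only [Complex.norm_real, Complex.norm_I, mul_one, Real.norm_eq_abs]
      exact le_trans ht1 (le_abs_self t)
    · rw [detAsub]
      have c1 : ((A 0 0 : ℝ) : ℂ) + ((A 1 1 : ℝ):ℂ) = 0 := by
        exact_mod_cast congrArg (fun x : ℝ => (x:ℂ)) htr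
      have c2 : ((t:ℝ):ℂ)^2 = ((A 0 0 : ℝ):ℂ) * ((A 1 1:ℝ):ℂ) - ((A 0 1:ℝ):ℂ) * ((A 1 0:ℝ):ℂ) := by
        exact_mod_cast congrArg (fun x : ℝ => (x:ℂ)) ht2
      linear_combination ((t:ℂ)^2) * Complex.I_sq + (-(t:ℂ)*Complex.I) * c1 + (-1 : ℂ) * c2
  · intro h
    have key : ∀ μ : ℂ, μ.re = 0 → 1 ≤ ‖μ‖ →
        (A.map (fun x : ℝ => (x : ℂ)) - μ • 1).det ≠ 0 := by
      intro μ hre habs hdet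
      rw [detAsub] at hdet
      set t := μ.im with htdef
      have hμ : μ = (t:ℂ) * Complex.I := by
        rw [Complex.ext_iff]; simp [hre, htdef]
      have ht2 : 1 ≤ t^2 := by
        have h1 := Complex.sq_norm μ
        have h2 : (1:ℝ) ≤ ‖μ‖ ^ 2 := by nlinarith
        rw [h1] at h2
        simpa [Complex.normSq_apply, hre, sq] using h2
      rw [hμ] at hdet
      have hcast : ((A 0 0 * A 1 1 - t^2 - A 0 1 * A 1 0 : ℝ) : ℂ)
          + ((-(t*(A 0 0 + A 1 1)) : ℝ):ℂ) * Complex.I = 0 := by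
        push_cast
        linear_combination hdet - (t:ℂ)^2 * Complex.I_sq
      rw [Complex.ext_iff] at hcast
      simp only [Complex.add_re, Complex.ofReal_re, Complex.mul_re, Complex.I_re,
        Complex.ofReal_im, Complex.I_im, Complex.add_im, Complex.mul_im,
        Complex.zero_re, Complex.zero_im] at hcast
      obtain ⟨e1, e2⟩ := hcast
      have htne : t ≠ 0 := by intro h0; rw [h0] at ht2; norm_num at ht2
      have htr0 : A 0 0 + A 1 1 = 0 := by
        rcases mul_eq_zero.mp (by linarith [e2] : t * (A 0 0 + A 1 1) = 0) with h' | h'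
        · exact absurd h' htne
        · exact h'
      rcases h with h' | h'
      · exact h' htr0
      · nlinarith [e1, ht2]
    refine ⟨?_, ?_, key⟩
    · have := key (-Complex.I) (by simp) (by simp)
      rwa [neg_smul, sub_neg_eq_add] at this
    · exact key Complex.I (by simp) (by simp)

/-- **Proposition 3.** The set of `A ∈ 𝒲` such that `S(A)` is not Lagrangian with respect to
any Kähler form on `ℂ²` contains a nonempty open subset of the 2×2 real matrices; in fact
`{A ∈ 𝒲 : x ≠ w and x² + w² − 2xw + 2yz < 0}` is such a subset. -/
theorem nonempty_open_set_of_non_Lagrangian_matrices (r : ℝ) (hr : 0 < r) :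
    Set.Nonempty {A : Matrix (Fin 2) (Fin 2) ℝ | A ∈ Wset ∧ A 0 0 ≠ A 1 1 ∧
        (A 0 0)^2 + (A 1 1)^2 - 2 * A 0 0 * A 1 1 + 2 * A 0 1 * A 1 0 < 0} ∧
    IsOpen {A : Matrix (Fin 2) (Fin 2) ℝ | A ∈ Wset ∧ A 0 0 ≠ A 1 1 ∧
        (A 0 0)^2 + (A 1 1)^2 - 2 * A 0 0 * A 1 1 + 2 * A 0 1 * A 1 0 < 0} ∧
    ∀ A ∈ {A : Matrix (Fin 2) (Fin 2) ℝ | A ∈ Wset ∧ A 0 0 ≠ A 1 1 ∧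
        (A 0 0)^2 + (A 1 1)^2 - 2 * A 0 0 * A 1 1 + 2 * A 0 1 * A 1 0 < 0},
      ∀ ω : EuclideanSpace ℂ (Fin 2) → (EuclideanSpace ℂ (Fin 2) →L[ℝ] EuclideanSpace ℂ (Fin 2) →L[ℝ] ℝ),
        IsKahler ω → ¬ IsLagrangianSA r A ω := by
  constructor
  · refine ⟨!![1/2, 1; -1, -1/2], ?_, ?_, ?_⟩
    · rw [wset_char]
      right
      norm_num [Matrix.cons_val_zero, Matrix.cons_val_one, Matrix.head_cons]
    · norm_num [Matrix.cons_val_zero, Matrix.cons_val_one, Matrix.head_cons]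
    · norm_num [Matrix.cons_val_zero, Matrix.cons_val_one, Matrix.head_cons]
  constructor
  · have hset : {A : Matrix (Fin 2) (Fin 2) ℝ | A ∈ Wset ∧ A 0 0 ≠ A 1 1 ∧
        (A 0 0)^2 + (A 1 1)^2 - 2 * A 0 0 * A 1 1 + 2 * A 0 1 * A 1 0 < 0}
        = {A : Matrix (Fin 2) (Fin 2) ℝ |
            (A 0 0 + A 1 1 ≠ 0 ∨ A 0 0 * A 1 1 - A 0 1 * A 1 0 < 1) ∧ A 0 0 ≠ A 1 1 ∧
            (A 0 0)^2 + (A 1 1)^2 - 2 * A 0 0 * A 1 1 + 2 * A 0 1 * A 1 0 < 0} := by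
      ext A
      simp only [Set.mem_setOf_eq, wset_char]
    rw [hset]
    have cont : ∀ i j : Fin 2, Continuous fun A : Matrix (Fin 2) (Fin 2) ℝ => A i j :=
      fun i j => (continuous_apply j).comp (continuous_apply i)
    refine IsOpen.inter (IsOpen.union ?_ ?_) (IsOpen.inter ?_ ?_)
    · exact isOpen_ne_fun ((cont 0 0).add (cont 1 1)) continuous_const
    · exact isOpen_lt (((cont 0 0).mul (cont 1 1)).sub ((cont 0 1).mul (cont 1 0))) continuous_const
    · exact isOpen_ne_fun (cont 0 0) (cont 1 1)
    · exact isOpen_lt (by continuity :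
        Continuous fun A : Matrix (Fin 2) (Fin 2) ℝ =>
          (A 0 0)^2 + (A 1 1)^2 - 2 * A 0 0 * A 1 1 + 2 * A 0 1 * A 1 0) continuous_const
  · rintro A ⟨-, -, hq⟩ ω hK hL
    exfalso
    obtain ⟨-, hanti, -, h11K, hpos⟩ := hK
    have he : ∀ k : Fin 2, (EuclideanSpace.single k (1:ℂ)) ∈ realPlane := by
      intro k j; simp [realPlane, EuclideanSpace.single_apply, apply_ite Complex.im]
    have hene : ∀ k : Fin 2, (EuclideanSpace.single k (1:ℂ)) ≠ 0 := by
      intro k h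
      have h2 := congrArg (fun z : EuclideanSpace ℂ (Fin 2) => z k) h
      simp only [EuclideanSpace.single_apply, if_pos rfl, PiLp.zero_apply] at h2
      exact one_ne_zero h2
    have p0real : (0:EuclideanSpace ℂ (Fin 2)) ∈ realPlane ∩ Metric.closedBall 0 r :=
      ⟨fun j => by simp [PiLp.zero_apply], mem_closedBall_self hr.le⟩
    have p0MA : (0:EuclideanSpace ℂ (Fin 2)) ∈ MA A ∩ Metric.closedBall 0 r :=
      ⟨⟨0, fun j => by simp [PiLp.zero_apply]⟩, mem_closedBall_self hr.le⟩
    have hre : ∀ u v : EuclideanSpace ℂ (Fin 2), u ∈ realPlane → v ∈ realPlane → ω 0 u v = 0 :=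
      fun u v hu hv => hL.1 0 p0real u hu v hv
    have key11 : ∀ u v : EuclideanSpace ℂ (Fin 2),
        ω 0 (Complex.I • u) v = - ω 0 u (Complex.I • v) := by
      intro u v
      have h1 := h11K 0 u (Complex.I • v)
      rw [smul_smul, Complex.I_mul_I, neg_one_smul, map_neg] at h1
      linarith
    have zI01 : ω 0 (Complex.I • EuclideanSpace.single 0 (1:ℂ))
        (Complex.I • EuclideanSpace.single 1 (1:ℂ)) = 0 := by
      rw [h11K 0]
      exact hre _ _ (he 0) (he 1)
    have hne : ∀ a b : ℝ, a ≠ 0 →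
        a • (EuclideanSpace.single 0 (1:ℂ) : EuclideanSpace ℂ (Fin 2))
          + b • EuclideanSpace.single 1 (1:ℂ) ≠ 0 := by
      intro a b ha h
      have h2 := congrArg (fun z : EuclideanSpace ℂ (Fin 2) => z 0) h
      simp only [PiLp.add_apply, PiLp.smul_apply, EuclideanSpace.single_apply,
        PiLp.zero_apply] at h2
      norm_num at h2
      exact ha h2
    have hw0 : ((A 0 0 : ℝ) • (EuclideanSpace.single 0 (1:ℂ) : EuclideanSpace ℂ (Fin 2))
        + (A 1 0 : ℝ) • EuclideanSpace.single 1 (1:ℂ)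
        + Complex.I • EuclideanSpace.single 0 (1:ℂ)) ∈ MA A := by
      refine ⟨Pi.single 0 1, fun j => ?_⟩
      fin_cases j <;>
        simp [PiLp.add_apply, PiLp.smul_apply, EuclideanSpace.single_apply,
          Pi.single_apply, Complex.real_smul, smul_eq_mul]
    have hw1 : ((A 0 1 : ℝ) • (EuclideanSpace.single 0 (1:ℂ) : EuclideanSpace ℂ (Fin 2))
        + (A 1 1 : ℝ) • EuclideanSpace.single 1 (1:ℂ)
        + Complex.I • EuclideanSpace.single 1 (1:ℂ)) ∈ MA A := by
      refine ⟨Pi.single 1 1, fun j => ?_⟩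
      fin_cases j <;>
        simp [PiLp.add_apply, PiLp.smul_apply, EuclideanSpace.single_apply,
          Pi.single_apply, Complex.real_smul, smul_eq_mul]
    have hM := hL.2 0 p0MA _ hw0 _ hw1
    exact kahler_core (ω 0) (EuclideanSpace.single 0 1) (EuclideanSpace.single 1 1)
      (A 0 0) (A 0 1) (A 1 0) (A 1 1) (hanti 0) key11 (fun v hv => hpos 0 v hv)
      (hre _ _ (he 0) (he 0)) (hre _ _ (he 0) (he 1)) (hre _ _ (he 1) (he 0))
      (hre _ _ (he 1) (he 1)) zI01 hne (hene 0) (hene 1) hM hq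
end
end

section
/- Let Ã = [[1,1],[−1,2]], let M(Ã) := {(Ã+iI)u : u ∈ ℝ²} ⊂ ℂ², and for r > 0 let S(Ã) := (ℝ² ∪ M(Ã)) ∩ closure(B(0,r)). Then S(Ã) is not Lagrangian with respect to any Kähler form on ℂ²: for every Kähler form ω on ℂ² there exist a point p ∈ S(Ã) and tangent vectors u, v to S(Ã) at p with ω_p(u,v) ≠ 0. -/
set_option linter.unusedVariables false


open Complex Metric Set MvPolynomial
open scoped Manifold

noncomputable section

/-- For `Ã = [[1,1],[−1,2]]`, the surface `S(Ã)` is not Lagrangian with respect to any Kähler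
form on `ℂ²`: every Kähler form is nonzero on some pair of tangent vectors to `S(Ã)`. -/
theorem SAtilde_not_Lagrangian (r : ℝ) (hr : 0 < r)
    (ω : EuclideanSpace ℂ (Fin 2) → (EuclideanSpace ℂ (Fin 2) →L[ℝ] EuclideanSpace ℂ (Fin 2) →L[ℝ] ℝ)) (hω : IsKahler ω) :
    ∃ (p u v : EuclideanSpace ℂ (Fin 2)),
      ((p ∈ realPlane ∩ Metric.closedBall 0 r ∧ u ∈ realPlane ∧ v ∈ realPlane) ∨
       (p ∈ MA !![(1:ℝ), 1; -1, 2] ∩ Metric.closedBall 0 r ∧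
        u ∈ MA !![(1:ℝ), 1; -1, 2] ∧ v ∈ MA !![(1:ℝ), 1; -1, 2])) ∧
      ω p u v ≠ 0 := by
  classical
  obtain ⟨hsmooth, hanti, hclosed, hbideg, hpos⟩ := hω
  by_contra hcon
  push_neg at hcon
  let e1 : EuclideanSpace ℂ (Fin 2) := !₂[1, 0]
  let e2 : EuclideanSpace ℂ (Fin 2) := !₂[0, 1]
  let m1 : EuclideanSpace ℂ (Fin 2) := !₂[1 + Complex.I, -1]
  let m2 : EuclideanSpace ℂ (Fin 2) := !₂[1, 2 + Complex.I]
  have he1 : e1 ∈ realPlane := by intro j; fin_cases j <;> simp [e1, realPlane]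
  have he2 : e2 ∈ realPlane := by intro j; fin_cases j <;> simp [e2, realPlane]
  have hm1 : m1 ∈ MA !![(1:ℝ), 1; -1, 2] := by
    refine ⟨![1, 0], ?_⟩
    intro j; fin_cases j <;> simp [m1, Fin.sum_univ_two]
  have hm2 : m2 ∈ MA !![(1:ℝ), 1; -1, 2] := by
    refine ⟨![0, 1], ?_⟩
    intro j; fin_cases j <;> simp [m2, Fin.sum_univ_two]
  have h0M : (0 : EuclideanSpace ℂ (Fin 2)) ∈ MA !![(1:ℝ), 1; -1, 2] := by
    refine ⟨0, ?_⟩; intro j; simp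
  have h0r : (0 : EuclideanSpace ℂ (Fin 2)) ∈ realPlane := by intro j; simp [realPlane]
  have hball : (0 : EuclideanSpace ℂ (Fin 2)) ∈ Metric.closedBall 0 r :=
    Metric.mem_closedBall_self hr.le
  have hre : ∀ u v : EuclideanSpace ℂ (Fin 2), u ∈ realPlane → v ∈ realPlane → ω 0 u v = 0 :=
    fun u v hu hv => hcon 0 u v (Or.inl ⟨⟨h0r, hball⟩, hu, hv⟩)
  have hm : ω 0 m1 m2 = 0 := hcon 0 m1 m2 (Or.inr ⟨⟨h0M, hball⟩, hm1, hm2⟩)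
  have hdec1 : m1 = (e1 - e2) + Complex.I • e1 := by
    ext j; fin_cases j <;> simp [m1, e1, e2]
  have hdec2 : m2 = (e1 + (2:ℝ) • e2) + Complex.I • e2 := by
    ext j; fin_cases j <;> simp [m2, e1, e2]
  -- notation for the three key values
  set x := ω 0 e1 (Complex.I • e1) with hx
  set y := ω 0 e2 (Complex.I • e2) with hy
  set s := ω 0 e1 (Complex.I • e2) with hs
  -- the other mixed term equals s
  have hsym : ω 0 e2 (Complex.I • e1) = s := by
    have h1 := hbideg 0 e2 (Complex.I • e1)
    have h2 : Complex.I • Complex.I • e1 = -e1 := by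
      rw [smul_smul]; norm_num
    rw [h2] at h1
    have h3 : ω 0 (Complex.I • e2) (-e1) = - ω 0 (Complex.I • e2) e1 := by
      simp
    rw [h3, hanti 0 (Complex.I • e2) e1, neg_neg] at h1
    rw [hs]; exact h1.symm
  -- expand ω 0 m1 m2
  rw [hdec1, hdec2] at hm
  simp only [map_add, map_sub, map_smul, ContinuousLinearMap.add_apply,
    ContinuousLinearMap.sub_apply, ContinuousLinearMap.smul_apply, smul_eq_mul] at hm
  rw [hanti 0 (Complex.I • e1) e1, hanti 0 (Complex.I • e1) e2, hsym, ← hx, ← hs, ← hy,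
    hbideg 0 e1 e2, hre _ _ he1 he1, hre _ _ he2 he1, hre _ _ he1 he2, hre _ _ he2 he2] at hm
  have hx0 : 0 < x := hpos 0 e1 (by intro h; have := congrArg (fun z => z 0) h; simp [e1] at this)
  have hy0 : 0 < y := hpos 0 e2 (by intro h; have := congrArg (fun z => z 1) h; simp [e2] at this)
  have hw0 : 0 < ω 0 (e1 + e2) (Complex.I • (e1 + e2)) :=
    hpos 0 (e1 + e2) (by intro h; have := congrArg (fun z => z 0) h; simp [e1, e2, Pi.add_apply] at this)
  rw [smul_add] at hw0
  simp only [map_add, ContinuousLinearMap.add_apply] at hw0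
  rw [← hx, ← hy, ← hs, hsym] at hw0
  linarith
end
end
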